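/- For every integer n ≥ 1, the total domination number of the n-dimensional hypercube equals its paired-domination number: γ_t(Q_n) = γ_pr(Q_n). -/

import Mathlib

open SimpleGraph

/-- The complete graph on two vertices. -/
abbrev K2 : SimpleGraph (Fin 2) := ⊤

/-- `S` is a dominating set of `G`: every vertex not in `S` is adjacent to a vertex of `S`. -/
def IsDominatingSet {V : Type*} (G : SimpleGraph V) (S : Finset V) : Prop :=
  ∀ v : V, v ∉ S → ∃ u ∈ S, G.Adj v u

/-- `S` is a total dominating set of `G`: every vertex is adjacent to a vertex of `S`. -/
def IsTotalDominatingSet {V : Type*} (G : SimpleGraph V) (S : Finset V) : Prop :=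
  ∀ v : V, ∃ u ∈ S, G.Adj v u

/-- The domination number of `G`. -/
noncomputable def dominationNumber {V : Type*} (G : SimpleGraph V) : ℕ :=
  sInf {n : ℕ | ∃ S : Finset V, IsDominatingSet G S ∧ S.card = n}

/-- The total domination number of `G`. -/
noncomputable def totalDominationNumber {V : Type*} (G : SimpleGraph V) : ℕ :=
  sInf {n : ℕ | ∃ S : Finset V, IsTotalDominatingSet G S ∧ S.card = n}

/-- `S` is a paired-dominating set of `G`: every vertex is adjacent to a vertex of `S`,
and the subgraph induced by `S` contains a perfect matching, encoded as a fixed-point-free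
involution on `S` pairing each vertex of `S` with an adjacent vertex of `S`. -/
def IsPairedDominatingSet {V : Type*} (G : SimpleGraph V) (S : Finset V) : Prop :=
  (∀ v : V, ∃ u ∈ S, G.Adj v u) ∧
    ∃ f : V → V, ∀ v ∈ S, f v ∈ S ∧ G.Adj v (f v) ∧ f (f v) = v

/-- The paired-domination number of `G`. -/
noncomputable def pairedDominationNumber {V : Type*} (G : SimpleGraph V) : ℕ :=
  sInf {n : ℕ | ∃ S : Finset V, IsPairedDominatingSet G S ∧ S.card = n}

/-- The `n`-dimensional hypercube: vertices are binary strings of length `n`,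
two vertices are adjacent iff they differ in exactly one coordinate. -/
def hypercube (n : ℕ) : SimpleGraph (Fin n → Bool) where
  Adj x y := hammingDist x y = 1
  symm := ⟨fun x y h => by simpa [hammingDist_comm] using h⟩
  loopless := ⟨fun x h => by simp [hammingDist_self] at h⟩

section AuxHC
variable {n : ℕ}

lemma ham_single {x y : Fin n → Bool} {j : Fin n} (hj : x j ≠ y j)
    (h : ∀ i, i ≠ j → x i = y i) : hammingDist x y = 1 := by
  have hf : (Finset.univ.filter (fun i => x i ≠ y i)) = {j} := by
    apply Finset.eq_singleton_iff_unique_mem.2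
    refine ⟨by simp [hj], ?_⟩
    intro i hi
    simp only [Finset.mem_filter] at hi
    by_contra hij
    exact hi.2 (h i hij)
  show (Finset.univ.filter (fun i => x i ≠ y i)).card = 1
  rw [hf]; simp

lemma ham_cases {x y : Fin n → Bool} (h : hammingDist x y = 1) :
    ∃ j, x j ≠ y j ∧ ∀ i, i ≠ j → x i = y i := by
  have h' : (Finset.univ.filter (fun i => x i ≠ y i)).card = 1 := h
  obtain ⟨j, hj⟩ := Finset.card_eq_one.1 h'
  refine ⟨j, ?_, ?_⟩
  · have : j ∈ Finset.univ.filter (fun i => x i ≠ y i) := by rw [hj]; simp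
    simpa using this
  · intro i hij
    by_contra hne
    have : i ∈ Finset.univ.filter (fun i => x i ≠ y i) := by simp [hne]
    rw [hj, Finset.mem_singleton] at this
    exact hij this

noncomputable def parz (x : Fin n → Bool) : ZMod 2 := ∑ i, if x i then 1 else 0

lemma parz_sub (x y : Fin n → Bool) : parz x - parz y = (hammingDist x y : ZMod 2) := by
  have hd : (hammingDist x y : ZMod 2)
      = ∑ i : Fin n, (if x i ≠ y i then (1 : ZMod 2) else 0) := by
    show (((Finset.univ.filter (fun i => x i ≠ y i)).card : ℕ) : ZMod 2) = _
    rw [Finset.card_filter]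
    push_cast
    apply Finset.sum_congr rfl
    intro i _
    by_cases h : x i ≠ y i <;> simp [h]
  rw [parz, parz, ← Finset.sum_sub_distrib, hd]
  apply Finset.sum_congr rfl
  intro i _
  cases hx : x i <;> cases hy : y i <;> simp [hx, hy] <;> decide

lemma parz_adj {x y : Fin n → Bool} (h : (hypercube n).Adj x y) : parz x ≠ parz y := by
  have hs := parz_sub x y
  have h1 : hammingDist x y = 1 := h
  rw [h1] at hs
  intro he
  rw [he, sub_self] at hs
  norm_num at hs

lemma zmod2_eq_of_ne : ∀ a b : ZMod 2, a ≠ b + 1 → a = b := by decide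

lemma zmod2_eq_one_iff : ∀ a : ZMod 2, a = 1 ↔ ¬ a = 0 := by decide

/-- flip coordinate `i0` -/
def flc (i0 : Fin n) (x : Fin n → Bool) : Fin n → Bool := Function.update x i0 (!x i0)

/-- project to the hyperplane `x i0 = false` -/
def prc (i0 : Fin n) (x : Fin n → Bool) : Fin n → Bool := Function.update x i0 false

variable (i0 : Fin n)

lemma flc_apply_self (x : Fin n → Bool) : flc i0 x i0 = !x i0 := by
  simp [flc]

lemma flc_apply_ne (x : Fin n → Bool) {i : Fin n} (h : i ≠ i0) : flc i0 x i = x i := by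
  simp [flc, Function.update_of_ne h]

lemma flc_adj (x : Fin n → Bool) : (hypercube n).Adj x (flc i0 x) := by
  show hammingDist x (flc i0 x) = 1
  apply ham_single (j := i0)
  · rw [flc_apply_self]; cases x i0 <;> simp
  · intro i hi; rw [flc_apply_ne i0 x hi]

lemma flc_flc (x : Fin n → Bool) : flc i0 (flc i0 x) = x := by
  funext i
  by_cases h : i = i0
  · subst h
    rw [flc_apply_self, flc_apply_self, Bool.not_not]
  · rw [flc_apply_ne i0 _ h, flc_apply_ne i0 _ h]

lemma prc_i0 (x : Fin n → Bool) : prc i0 x i0 = false := by simp [prc]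

lemma prc_apply_ne (x : Fin n → Bool) {i : Fin n} (h : i ≠ i0) : prc i0 x i = x i := by
  simp [prc, Function.update_of_ne h]

lemma prc_eq_self {x : Fin n → Bool} (h : x i0 = false) : prc i0 x = x := by
  funext i
  by_cases hi : i = i0
  · subst hi; rw [prc_i0, h]
  · rw [prc_apply_ne i0 x hi]

lemma prc_flc (x : Fin n → Bool) : prc i0 (flc i0 x) = prc i0 x := by
  funext i
  by_cases hi : i = i0
  · subst hi; rw [prc_i0, prc_i0]
  · rw [prc_apply_ne i0 _ hi, prc_apply_ne i0 _ hi, flc_apply_ne i0 x hi]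

lemma adj_flc_flc {x y : Fin n → Bool} (hx : x i0 = false) (hy : y i0 = false)
    (h : (hypercube n).Adj x y) : (hypercube n).Adj (flc i0 x) (flc i0 y) := by
  obtain ⟨j, hj, hrest⟩ := ham_cases (x := x) (y := y) h
  have hji : j ≠ i0 := by
    intro he; subst he; rw [hx, hy] at hj; exact hj rfl
  show hammingDist (flc i0 x) (flc i0 y) = 1
  apply ham_single (j := j)
  · rw [flc_apply_ne i0 x hji, flc_apply_ne i0 y hji]; exact hj
  · intro i hij
    by_cases hi : i = i0
    · subst hi; rw [flc_apply_self, flc_apply_self, hx, hy]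
    · rw [flc_apply_ne i0 x hi, flc_apply_ne i0 y hi]; exact hrest i hij

lemma prc_cover {x u : Fin n → Bool} (h : (hypercube n).Adj x u) :
    prc i0 x = prc i0 u ∨ (hypercube n).Adj (prc i0 x) (prc i0 u) := by
  obtain ⟨j, hj, hrest⟩ := ham_cases (x := x) (y := u) h
  by_cases hji : j = i0
  · left
    subst hji
    funext i
    by_cases hi : i = j
    · subst hi; rw [prc_i0, prc_i0]
    · rw [prc_apply_ne _ x hi, prc_apply_ne _ u hi]; exact hrest i hi
  · right
    show hammingDist (prc i0 x) (prc i0 u) = 1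
    apply ham_single (j := j)
    · rw [prc_apply_ne i0 x hji, prc_apply_ne i0 u hji]; exact hj
    · intro i hij
      by_cases hi : i = i0
      · subst hi; rw [prc_i0, prc_i0]
      · rw [prc_apply_ne i0 x hi, prc_apply_ne i0 u hi]; exact hrest i hij

end AuxHC

/-- For every `n ≥ 1`, `γ_t(Q_n) = γ_pr(Q_n)`. -/
theorem totalDomination_eq_pairedDomination_hypercube (n : ℕ) (hn : 1 ≤ n) :
    totalDominationNumber (hypercube n) = pairedDominationNumber (hypercube n) := by
  classical
  have i0 : Fin n := ⟨0, hn⟩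
  set G := hypercube n with hG
  -- the three sets of cardinalities
  set TD : Set ℕ := {k : ℕ | ∃ S : Finset (Fin n → Bool), IsTotalDominatingSet G S ∧ S.card = k}
    with hTD
  set PD : Set ℕ := {k : ℕ | ∃ S : Finset (Fin n → Bool), IsPairedDominatingSet G S ∧ S.card = k}
    with hPD
  set HD : Set ℕ := {k : ℕ | ∃ D : Finset (Fin n → Bool),
      (∀ x ∈ D, x i0 = false) ∧
      (∀ y : Fin n → Bool, y i0 = false → y ∈ D ∨ ∃ u ∈ D, G.Adj y u) ∧ D.card = k}
    with hHD
  have hPDne : PD.Nonempty := by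
    refine ⟨(Finset.univ : Finset (Fin n → Bool)).card, Finset.univ, ⟨?_, ?_⟩, rfl⟩
    · intro v; exact ⟨flc i0 v, Finset.mem_univ _, flc_adj i0 v⟩
    · exact ⟨flc i0, fun v _ => ⟨Finset.mem_univ _, flc_adj i0 v, flc_flc i0 v⟩⟩
  have hTDne : TD.Nonempty := by
    refine ⟨(Finset.univ : Finset (Fin n → Bool)).card, Finset.univ, ?_, rfl⟩
    intro v; exact ⟨flc i0 v, Finset.mem_univ _, flc_adj i0 v⟩
  have hHDne : HD.Nonempty := by
    refine ⟨(Finset.univ.filter (fun x : Fin n → Bool => x i0 = false)).card,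
      Finset.univ.filter (fun x => x i0 = false), ?_, ?_, rfl⟩
    · intro x hx; exact (Finset.mem_filter.1 hx).2
    · intro y hy; exact Or.inl (by simp [hy])
  -- Step 1 : γ_t ≤ γ_pr
  have step1 : totalDominationNumber G ≤ pairedDominationNumber G := by
    obtain ⟨S, hS, hcard⟩ := Nat.sInf_mem hPDne
    exact Nat.sInf_le ⟨S, hS.1, hcard⟩
  -- Step 2 : γ_pr ≤ 2 * sInf HD
  have step2 : pairedDominationNumber G ≤ 2 * sInf HD := by
    obtain ⟨D, hD0, hDdom, hcard⟩ := Nat.sInf_mem hHDne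
    set S : Finset (Fin n → Bool) := D ∪ D.image (flc i0) with hSdef
    have hflinj : Function.Injective (flc i0) := by
      intro a b hab
      have := congrArg (flc i0) hab
      rwa [flc_flc, flc_flc] at this
    have hdisj : Disjoint D (D.image (flc i0)) := by
      rw [Finset.disjoint_left]
      intro a ha hb
      obtain ⟨b, hbD, hba⟩ := Finset.mem_image.1 hb
      have h1 : a i0 = false := hD0 a ha
      have h2 : b i0 = false := hD0 b hbD
      have : flc i0 b i0 = !b i0 := flc_apply_self i0 b
      rw [hba, h1, h2] at this
      exact Bool.false_ne_true this
    have hScard : S.card = 2 * D.card := by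
      rw [hSdef, Finset.card_union_of_disjoint hdisj, Finset.card_image_of_injective _ hflinj]
      ring
    have hSpair : IsPairedDominatingSet G S := by
      constructor
      · -- total domination
        intro v
        have hpv : prc i0 v i0 = false := prc_i0 i0 v
        rcases hDdom (prc i0 v) hpv with hin | ⟨u, huD, hadj⟩
        · -- prc v itself is in D
          by_cases hv : v i0 = false
          · have hveq : prc i0 v = v := prc_eq_self i0 hv
            refine ⟨flc i0 v, ?_, flc_adj i0 v⟩
            rw [hSdef]
            apply Finset.mem_union_right
            rw [← hveq]
            exact Finset.mem_image_of_mem _ hin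
          · -- v i0 = true, so v = flc i0 (prc i0 v)
            have hveq : flc i0 (prc i0 v) = v := by
              funext i
              by_cases hi : i = i0
              · rw [hi, flc_apply_self, prc_i0]
                cases hvv : v i0
                · exact absurd hvv hv
                · decide
              · rw [flc_apply_ne i0 _ hi, prc_apply_ne i0 v hi]
            refine ⟨prc i0 v, ?_, ?_⟩
            · rw [hSdef]; exact Finset.mem_union_left _ hin
            · have := flc_adj i0 (prc i0 v)
              rw [hveq] at this
              exact ((hypercube n).adj_symm this)
        · -- prc v has a neighbour u in D
          by_cases hv : v i0 = false
          · have hveq : prc i0 v = v := prc_eq_self i0 hv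
            refine ⟨u, ?_, ?_⟩
            · rw [hSdef]; exact Finset.mem_union_left _ huD
            · rw [← hveq]; exact hadj
          · have hveq : flc i0 (prc i0 v) = v := by
              funext i
              by_cases hi : i = i0
              · rw [hi, flc_apply_self, prc_i0]
                cases hvv : v i0
                · exact absurd hvv hv
                · decide
              · rw [flc_apply_ne i0 _ hi, prc_apply_ne i0 v hi]
            refine ⟨flc i0 u, ?_, ?_⟩
            · rw [hSdef]
              exact Finset.mem_union_right _ (Finset.mem_image_of_mem _ huD)
            · have := adj_flc_flc i0 (prc_i0 i0 v) (hD0 u huD) hadj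
              rwa [hveq] at this
      · -- pairing
        refine ⟨flc i0, ?_⟩
        intro v hv
        rw [hSdef] at hv
        rcases Finset.mem_union.1 hv with hv1 | hv2
        · exact ⟨by rw [hSdef]; exact Finset.mem_union_right _ (Finset.mem_image_of_mem _ hv1),
            flc_adj i0 v, flc_flc i0 v⟩
        · obtain ⟨b, hbD, hbv⟩ := Finset.mem_image.1 hv2
          refine ⟨?_, flc_adj i0 v, flc_flc i0 v⟩
          rw [hSdef]
          apply Finset.mem_union_left
          rw [← hbv, flc_flc]
          exact hbD
    calc pairedDominationNumber G ≤ S.card := Nat.sInf_le ⟨S, hSpair, rfl⟩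
      _ = 2 * sInf HD := by rw [hScard, hcard]
  -- Step 3 : 2 * sInf HD ≤ γ_t
  have step3 : 2 * sInf HD ≤ totalDominationNumber G := by
    obtain ⟨S, hS, hcard⟩ := Nat.sInf_mem hTDne
    -- generic parity slice
    have key : ∀ p : ZMod 2, sInf HD ≤ (S.filter (fun x => parz x = p)).card := by
      intro p
      set Sp := S.filter (fun x => parz x = p) with hSp
      set Dp := Sp.image (prc i0) with hDp
      have hinj : ∀ x ∈ Sp, ∀ y ∈ Sp, prc i0 x = prc i0 y → x = y := by
        intro x hx y hy hxy
        have hpx : parz x = p := (Finset.mem_filter.1 hx).2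
        have hpy : parz y = p := (Finset.mem_filter.1 hy).2
        have hne : ∀ i, i ≠ i0 → x i = y i := by
          intro i hi
          have := congrFun hxy i
          rwa [prc_apply_ne i0 x hi, prc_apply_ne i0 y hi] at this
        by_cases h0 : x i0 = y i0
        · funext i
          by_cases hi : i = i0
          · subst hi; exact h0
          · exact hne i hi
        · exfalso
          have hadj : (hypercube n).Adj x y := ham_single h0 hne
          exact parz_adj hadj (hpx.trans hpy.symm)
      have hcardD : Dp.card = Sp.card := Finset.card_image_iff.2 (fun x hx y hy => hinj x hx y hy)
      have hmem : Dp.card ∈ HD := by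
        refine ⟨Dp, ?_, ?_, rfl⟩
        · intro x hx
          obtain ⟨b, _, hb⟩ := Finset.mem_image.1 hx
          rw [← hb]; exact prc_i0 i0 b
        · intro y hy
          -- choose x over y with parz x = p + 1
          have hex : ∃ x : Fin n → Bool, prc i0 x = y ∧ parz x = p + 1 := by
            by_cases hyp : parz y = p + 1
            · exact ⟨y, prc_eq_self i0 hy, hyp⟩
            · refine ⟨flc i0 y, ?_, ?_⟩
              · rw [prc_flc, prc_eq_self i0 hy]
              · have h1 : parz (flc i0 y) - parz y = 1 := by
                  have := parz_sub (flc i0 y) y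
                  have hh : hammingDist (flc i0 y) y = 1 :=
                    (hypercube n).adj_symm (flc_adj i0 y)
                  rw [hh] at this
                  simpa using this
                have hyeq : parz y = p := zmod2_eq_of_ne _ _ hyp
                have : parz (flc i0 y) = 1 + parz y := by
                  rw [← h1]; ring
                rw [this, hyeq]; ring
          obtain ⟨x, hxy, hxp⟩ := hex
          obtain ⟨u, huS, hadj⟩ := hS x
          have hup : parz u = p := by
            have hne : parz u ≠ parz x := (parz_adj ((hypercube n).adj_symm hadj))
            rw [hxp] at hne
            exact zmod2_eq_of_ne _ _ hne
          have huSp : u ∈ Sp := Finset.mem_filter.2 ⟨huS, hup⟩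
          rcases prc_cover i0 hadj with heq | hadj'
          · left
            rw [hxy] at heq
            rw [heq]
            exact Finset.mem_image_of_mem _ huSp
          · right
            refine ⟨prc i0 u, Finset.mem_image_of_mem _ huSp, ?_⟩
            rwa [hxy] at hadj'
      calc sInf HD ≤ Dp.card := Nat.sInf_le hmem
        _ = Sp.card := hcardD
    have hsplit : (S.filter (fun x => parz x = 0)).card
        + (S.filter (fun x => parz x = 1)).card = S.card := by
      have hfe : S.filter (fun x => parz x = 1) = S.filter (fun x => ¬ parz x = 0) := by
        apply Finset.filter_congr
        intro x _
        simpa using zmod2_eq_one_iff (parz x)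
      rw [hfe, Finset.card_filter_add_card_filter_not]
    have h0 := key 0
    have h1 := key 1
    calc 2 * sInf HD = sInf HD + sInf HD := by ring
      _ ≤ (S.filter (fun x => parz x = 0)).card + (S.filter (fun x => parz x = 1)).card :=
          Nat.add_le_add h0 h1
      _ = S.card := hsplit
      _ = totalDominationNumber G := hcard
  exact le_antisymm step1 (le_trans step2 step3)
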